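/- Let t ≥ 1 be an integer and set V = [4t], partitioned into blocks V_i = {a_i, b_i, c_i, d_i} with a_i = 4i−3, b_i = 4i−2, c_i = 4i−1, d_i = 4i for i ∈ [t]. Let the left vertex set S be the 2-element subsets of V, the right vertex set T = V, let E1 = {(e,v) : e ∈ S, v ∈ e} be the incidence graph of K_{4t}, and let E2 consist of the 2t 2-edges ({a_i,b_i}, c_i; {a_i,c_i}, d_i) and ({b_i,d_i}, a_i; {c_i,d_i}, b_i) for i ∈ [t]. Then (E1,E2) satisfies the simplicity condition and contains no generalized C4-cycle. -/

import Mathlib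

open Finset

/-- A bipartite graph on `α × β` (a set of cells, called 1-edges) is `C₄`-free if no two
distinct rows share two distinct columns. -/
def C4Free {α β : Type*} (E1 : Finset (α × β)) : Prop :=
  ∀ i k : α, ∀ j l : β, i ≠ k → j ≠ l →
    (i, j) ∈ E1 → (i, l) ∈ E1 → (k, j) ∈ E1 → (k, l) ∈ E1 → False

/-- A 2-edge `(i,j;k,l)`: a pair of cells, its two halves `(i,j)` and `(k,l)`. -/
abbrev TwoEdge (α β : Type*) := (α × β) × (α × β)

/-- A 2-edge `(i,j;k,l)` is nondegenerate if `i ≠ k` and `j ≠ l`. -/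
def Nondeg {α β : Type*} (e : TwoEdge α β) : Prop :=
  e.1.1 ≠ e.2.1 ∧ e.1.2 ≠ e.2.2

/-- The simplicity condition: the halves of the 2-edges in `E2` are pairwise distinct
cells, none of which lies in `E1`. -/
def Simple {α β : Type*} (E1 : Finset (α × β)) (E2 : Finset (TwoEdge α β)) : Prop :=
  (∀ e ∈ E2, e.1 ≠ e.2) ∧
  (∀ e ∈ E2, e.1 ∉ E1 ∧ e.2 ∉ E1) ∧
  (∀ e ∈ E2, ∀ f ∈ E2, e ≠ f →
    e.1 ≠ f.1 ∧ e.1 ≠ f.2 ∧ e.2 ≠ f.1 ∧ e.2 ≠ f.2)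

/-- A cell is occupied if it lies in `E1` or is a half of some 2-edge in `E2`. -/
def Occupied {α β : Type*} (E1 : Finset (α × β)) (E2 : Finset (TwoEdge α β))
    (c : α × β) : Prop :=
  c ∈ E1 ∨ ∃ e ∈ E2, e.1 = c ∨ e.2 = c

/-- `(E1, E2)` contains a generalized `C₄`-cycle:
(1) a classical `C₄` among 1-edges; or
(2) a nondegenerate 2-edge `(i,j;k,l) ∈ E2` with both opposite cells `(i,l)`, `(k,j)` occupied; or
(3) a 2-edge `(i,j;p,q) ∈ E2` and a cell `(k,l)` with `k ∉ {i,p}`, `l ∉ {j,q}` such that the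
five cells `(k,l), (k,j), (k,q), (i,l), (p,l)` are all occupied, these five cells being
pairwise distinct in case the 2-edge is nondegenerate. -/
def HasGenC4 {α β : Type*} (E1 : Finset (α × β)) (E2 : Finset (TwoEdge α β)) : Prop :=
  (∃ i k : α, ∃ j l : β, i ≠ k ∧ j ≠ l ∧
      (i, j) ∈ E1 ∧ (i, l) ∈ E1 ∧ (k, j) ∈ E1 ∧ (k, l) ∈ E1) ∨
  (∃ e ∈ E2, Nondeg e ∧
      Occupied E1 E2 (e.1.1, e.2.2) ∧ Occupied E1 E2 (e.2.1, e.1.2)) ∨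
  (∃ e ∈ E2, ∃ k : α, ∃ l : β,
      k ≠ e.1.1 ∧ k ≠ e.2.1 ∧ l ≠ e.1.2 ∧ l ≠ e.2.2 ∧
      Occupied E1 E2 (k, l) ∧ Occupied E1 E2 (k, e.1.2) ∧ Occupied E1 E2 (k, e.2.2) ∧
      Occupied E1 E2 (e.1.1, l) ∧ Occupied E1 E2 (e.2.1, l) ∧
      (Nondeg e →
        [(k, l), (k, e.1.2), (k, e.2.2), (e.1.1, l), (e.2.1, l)].Pairwise (· ≠ ·)))

/-- The Zarankiewicz number `z(m,n)`: the maximum number of cells of a `C₄`-free bipartite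
graph on `[m] × [n]`. -/
noncomputable def zar (m n : ℕ) : ℕ :=
  sSup {k | ∃ E1 : Finset (Fin m × Fin n), C4Free E1 ∧ E1.card = k}

/-- An admissible limited augmented bipartite graph on `[m] × [n]`: `E1` is `C₄`-free with
`|E1| = z(m,n)`, the simplicity condition holds, and there is no generalized `C₄`-cycle. -/
def Admissible {m n : ℕ} (E1 : Finset (Fin m × Fin n))
    (E2 : Finset (TwoEdge (Fin m) (Fin n))) : Prop :=
  C4Free E1 ∧ E1.card = zar m n ∧ Simple E1 E2 ∧ ¬ HasGenC4 E1 E2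

/-- The limited augmented Zarankiewicz number `z_L(m,n)`: the maximum of `|E1| + |E2|`
over all admissible limited augmented bipartite graphs on `[m] × [n]`. -/
noncomputable def zL (m n : ℕ) : ℕ :=
  sSup {k | ∃ (E1 : Finset (Fin m × Fin n)) (E2 : Finset (TwoEdge (Fin m) (Fin n))),
    Admissible E1 E2 ∧ E1.card + E2.card = k}

/-- The left vertex set for the `K_{4t}` incidence graph: 2-element subsets of `[4t]`. -/
abbrev KEdges (t : ℕ) := {e : Finset (Fin (4 * t)) // e.card = 2}

/-- The incidence bipartite graph of `K_{4t}`. -/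
def IncK (t : ℕ) : Finset (KEdges t × Fin (4 * t)) :=
  Finset.univ.filter fun p => p.2 ∈ p.1.val

/-- The 2-element subset `{a, b}` as a left vertex. -/
def pr {t : ℕ} (a b : Fin (4 * t)) (h : a ≠ b) : KEdges t :=
  ⟨{a, b}, Finset.card_pair h⟩

/-- The vertex `a_i = 4i − 3` of block `V_i` (0-indexed: `4i`). -/
def va {t : ℕ} (i : Fin t) : Fin (4 * t) := ⟨4 * i.val, by have := i.isLt; omega⟩
/-- The vertex `b_i = 4i − 2` of block `V_i` (0-indexed: `4i + 1`). -/
def vb {t : ℕ} (i : Fin t) : Fin (4 * t) := ⟨4 * i.val + 1, by have := i.isLt; omega⟩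
/-- The vertex `c_i = 4i − 1` of block `V_i` (0-indexed: `4i + 2`). -/
def vc {t : ℕ} (i : Fin t) : Fin (4 * t) := ⟨4 * i.val + 2, by have := i.isLt; omega⟩
/-- The vertex `d_i = 4i` of block `V_i` (0-indexed: `4i + 3`). -/
def vd {t : ℕ} (i : Fin t) : Fin (4 * t) := ⟨4 * i.val + 3, by have := i.isLt; omega⟩

/-- The 2-edge `({a_i,b_i}, c_i; {a_i,c_i}, d_i)`. -/
def wedge1 {t : ℕ} (i : Fin t) : TwoEdge (KEdges t) (Fin (4 * t)) :=
  ((pr (va i) (vb i) (Fin.ne_of_val_ne (by simp [va, vb])), vc i),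
   (pr (va i) (vc i) (Fin.ne_of_val_ne (by simp [va, vc])), vd i))

/-- The 2-edge `({b_i,d_i}, a_i; {c_i,d_i}, b_i)`. -/
def wedge2 {t : ℕ} (i : Fin t) : TwoEdge (KEdges t) (Fin (4 * t)) :=
  ((pr (vb i) (vd i) (Fin.ne_of_val_ne (by simp [vb, vd])), va i),
   (pr (vc i) (vd i) (Fin.ne_of_val_ne (by simp [vc, vd])), vb i))

/-- The set of the `2t` within-block 2-edges. -/
def E2K (t : ℕ) : Finset (TwoEdge (KEdges t) (Fin (4 * t))) :=
  Finset.univ.biUnion fun i : Fin t => {wedge1 i, wedge2 i}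


section Helpers

variable {t : ℕ}

@[simp] lemma va_val (i : Fin t) : (va i : Fin (4 * t)).val = 4 * i.val := rfl
@[simp] lemma vb_val (i : Fin t) : (vb i : Fin (4 * t)).val = 4 * i.val + 1 := rfl
@[simp] lemma vc_val (i : Fin t) : (vc i : Fin (4 * t)).val = 4 * i.val + 2 := rfl
@[simp] lemma vd_val (i : Fin t) : (vd i : Fin (4 * t)).val = 4 * i.val + 3 := rfl

@[simp] lemma pr_val (a b : Fin (4 * t)) (h : a ≠ b) : (pr a b h).val = {a, b} := rfl

lemma mem_pair_nat {n : ℕ} {a c d : Fin n} (h : a ∈ ({c, d} : Finset (Fin n))) :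
    a.val = c.val ∨ a.val = d.val := by
  rcases Finset.mem_insert.mp h with h | h
  · exact Or.inl (congrArg Fin.val h)
  · exact Or.inr (congrArg Fin.val (Finset.mem_singleton.mp h))

lemma pair_eq_nat {n : ℕ} {a b c d : Fin n} (h : ({a, b} : Finset (Fin n)) = {c, d}) :
    (a.val = c.val ∨ a.val = d.val) ∧ (b.val = c.val ∨ b.val = d.val) :=
  ⟨mem_pair_nat (h ▸ Finset.mem_insert_self a {b}),
   mem_pair_nat (h ▸ Finset.mem_insert_of_mem (Finset.mem_singleton_self b))⟩

lemma memE2K {f : TwoEdge (KEdges t) (Fin (4 * t))} (hf : f ∈ E2K t) :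
    ∃ i : Fin t, f = wedge1 i ∨ f = wedge2 i := by
  simpa [E2K] using hf

lemma mem_IncK {e : KEdges t} {v : Fin (4 * t)} (h : (e, v) ∈ IncK t) : v ∈ e.val := by
  simpa [IncK] using h

lemma occupied_elim {e : KEdges t} {v : Fin (4 * t)}
    (h : Occupied (IncK t) (E2K t) (e, v)) :
    v ∈ e.val ∨ ∃ i : Fin t,
      (e.val = {va i, vb i} ∧ v = vc i) ∨ (e.val = {va i, vc i} ∧ v = vd i) ∨
      (e.val = {vb i, vd i} ∧ v = va i) ∨ (e.val = {vc i, vd i} ∧ v = vb i) := by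
  rcases h with h | ⟨f, hf, hc⟩
  · exact Or.inl (mem_IncK h)
  · right
    obtain ⟨i, hi | hi⟩ := memE2K hf <;> subst hi <;> refine ⟨i, ?_⟩ <;>
        rcases hc with hc | hc <;> rw [Prod.ext_iff] at hc
    · exact Or.inl ⟨congrArg Subtype.val hc.1.symm, hc.2.symm⟩
    · exact Or.inr (Or.inl ⟨congrArg Subtype.val hc.1.symm, hc.2.symm⟩)
    · exact Or.inr (Or.inr (Or.inl ⟨congrArg Subtype.val hc.1.symm, hc.2.symm⟩))
    · exact Or.inr (Or.inr (Or.inr ⟨congrArg Subtype.val hc.1.symm, hc.2.symm⟩))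

end Helpers

/-- for every `t ≥ 1`, the incidence graph of `K_{4t}` together with the
`2t` within-block 2-edges satisfies the simplicity condition and contains no generalized
`C₄`-cycle. -/
theorem K4t_within_block_admissible (t : ℕ) (ht : 1 ≤ t) :
    Simple (IncK t) (E2K t) ∧ ¬ HasGenC4 (IncK t) (E2K t) := by
  constructor
  · refine ⟨?_, ?_, ?_⟩
    · -- halves of each 2-edge are distinct
      intro e he
      obtain ⟨i, rfl | rfl⟩ := memE2K he <;>
        · intro h
          have h2 := congrArg (fun p => (Prod.snd p).val) h
          simp only [wedge1, wedge2, vc_val, vd_val, va_val, vb_val] at h2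
          omega
    · -- halves are not in E1
      intro e he
      obtain ⟨i, rfl | rfl⟩ := memE2K he <;>
        constructor <;>
        · intro h
          have h2 := mem_pair_nat (mem_IncK h)
          simp only [va_val, vb_val, vc_val, vd_val] at h2
          omega
    · -- halves of distinct 2-edges are distinct
      intro e he f hf hef
      obtain ⟨i, rfl | rfl⟩ := memE2K he <;> obtain ⟨j, rfl | rfl⟩ := memE2K hf
      · have hij : i.val ≠ j.val := fun h => hef (congrArg wedge1 (Fin.ext h))
        refine ⟨?_, ?_, ?_, ?_⟩ <;>
          · intro h
            have h2 := congrArg (fun p => (Prod.snd p).val) h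
            simp only [wedge1, vc_val, vd_val] at h2
            omega
      · refine ⟨?_, ?_, ?_, ?_⟩ <;>
          · intro h
            have h2 := congrArg (fun p => (Prod.snd p).val) h
            simp only [wedge1, wedge2, va_val, vb_val, vc_val, vd_val] at h2
            omega
      · refine ⟨?_, ?_, ?_, ?_⟩ <;>
          · intro h
            have h2 := congrArg (fun p => (Prod.snd p).val) h
            simp only [wedge1, wedge2, va_val, vb_val, vc_val, vd_val] at h2
            omega
      · have hij : i.val ≠ j.val := fun h => hef (congrArg wedge2 (Fin.ext h))
        refine ⟨?_, ?_, ?_, ?_⟩ <;>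
          · intro h
            have h2 := congrArg (fun p => (Prod.snd p).val) h
            simp only [wedge2, va_val, vb_val] at h2
            omega
  · rintro (⟨e1, e2, j, l, hee, hjl, h1, h2, h3, h4⟩ | ⟨f, hf, hnd, ho1, ho2⟩ |
      ⟨f, hf, k, l, hk1, hk2, hl1, hl2, o1, o2, o3, o4, o5, -⟩)
    · -- (1) no C4 in the incidence graph
      have key : ∀ e : KEdges t, (e, j) ∈ IncK t → (e, l) ∈ IncK t → e.val = {j, l} := by
        intro e ha hb
        have hsub : ({j, l} : Finset (Fin (4 * t))) ⊆ e.val := by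
          intro x hx
          rcases Finset.mem_insert.mp hx with rfl | hx
          · exact mem_IncK ha
          · rw [Finset.mem_singleton.mp hx]; exact mem_IncK hb
        exact (Finset.eq_of_subset_of_card_le hsub (by rw [e.prop, Finset.card_pair hjl])).symm
      exact hee (Subtype.ext ((key e1 h1 h2).trans (key e2 h3 h4).symm))
    · -- (2) opposite cell of a 2-edge is never occupied
      obtain ⟨i, rfl | rfl⟩ := memE2K hf
      · -- unoccupied opposite cell ({a,b}, d)
        have ho1' : Occupied (IncK t) (E2K t)
            (pr (va i) (vb i) (Fin.ne_of_val_ne (by simp [va, vb])), vd i) := ho1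
        rcases occupied_elim ho1' with h | ⟨m, ⟨hp, hv⟩ | ⟨hp, hv⟩ | ⟨hp, hv⟩ | ⟨hp, hv⟩⟩
        · have h2 := mem_pair_nat (by simpa using h)
          simp only [va_val, vb_val, vd_val] at h2; omega
        all_goals
          have hp' := pair_eq_nat (by simpa using hp)
          have hv' := congrArg Fin.val hv
          simp only [va_val, vb_val, vc_val, vd_val] at hp' hv'
          omega
      · -- unoccupied opposite cell ({c,d}, a)
        have ho2' : Occupied (IncK t) (E2K t)
            (pr (vc i) (vd i) (Fin.ne_of_val_ne (by simp [vc, vd])), va i) := ho2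
        rcases occupied_elim ho2' with h | ⟨m, ⟨hp, hv⟩ | ⟨hp, hv⟩ | ⟨hp, hv⟩ | ⟨hp, hv⟩⟩
        · have h2 := mem_pair_nat (by simpa using h)
          simp only [va_val, vc_val, vd_val] at h2; omega
        all_goals
          have hp' := pair_eq_nat (by simpa using hp)
          have hv' := congrArg Fin.val hv
          simp only [va_val, vb_val, vc_val, vd_val] at hp' hv'
          omega
    · -- (3) no five-cell configuration
      obtain ⟨i, rfl | rfl⟩ := memE2K hf
      · -- f = wedge1 i : rows {a,b} and {a,c}, columns c and d
        have hl1' : l.val ≠ 4 * i.val + 2 := fun h => hl1 (Fin.ext (by simpa [wedge1] using h))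
        have hl2' : l.val ≠ 4 * i.val + 3 := fun h => hl2 (Fin.ext (by simpa [wedge1] using h))
        -- from o4 : l ∈ {a i, b i}
        have hla : l.val = 4 * i.val ∨ l.val = 4 * i.val + 1 := by
          have o4' : Occupied (IncK t) (E2K t)
              (pr (va i) (vb i) (Fin.ne_of_val_ne (by simp [va, vb])), l) := o4
          rcases occupied_elim o4' with h | ⟨m, ⟨hp, hv⟩ | ⟨hp, hv⟩ | ⟨hp, hv⟩ | ⟨hp, hv⟩⟩
          · have h2 := mem_pair_nat (by simpa using h)
            simp only [va_val, vb_val] at h2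
            exact h2
          all_goals
            exfalso
            have hp' := pair_eq_nat (by simpa using hp)
            have hv' := congrArg Fin.val hv
            simp only [va_val, vb_val, vc_val, vd_val] at hp' hv'
            omega
        -- from o5 : l ∈ {a i, c i}, hence l = a i
        have hlv : l.val = 4 * i.val := by
          have o5' : Occupied (IncK t) (E2K t)
              (pr (va i) (vc i) (Fin.ne_of_val_ne (by simp [va, vc])), l) := o5
          rcases occupied_elim o5' with h | ⟨m, ⟨hp, hv⟩ | ⟨hp, hv⟩ | ⟨hp, hv⟩ | ⟨hp, hv⟩⟩
          · have h2 := mem_pair_nat (by simpa using h)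
            simp only [va_val, vc_val] at h2
            omega
          all_goals
            exfalso
            have hp' := pair_eq_nat (by simpa using hp)
            have hv' := congrArg Fin.val hv
            simp only [va_val, vb_val, vc_val, vd_val] at hp' hv'
            omega
        -- from o2 : c i ∈ k
        have hkc : vc i ∈ k.val := by
          have o2' : Occupied (IncK t) (E2K t) (k, vc i) := o2
          rcases occupied_elim o2' with h | ⟨m, ⟨hp, hv⟩ | ⟨hp, hv⟩ | ⟨hp, hv⟩ | ⟨hp, hv⟩⟩
          · exact h
          · -- vc i = vc m forces m = i, then k = {a,b} contradicting hk1
            exfalso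
            have hv' := congrArg Fin.val hv
            simp only [vc_val] at hv'
            have : m = i := Fin.ext (by omega)
            subst this
            exact hk1 (Subtype.ext (by rw [hp]; rfl))
          all_goals
            exfalso
            have hv' := congrArg Fin.val hv
            simp only [va_val, vb_val, vc_val, vd_val] at hv'
            omega
        -- from o3 : d i ∈ k
        have hkd : vd i ∈ k.val := by
          have o3' : Occupied (IncK t) (E2K t) (k, vd i) := o3
          rcases occupied_elim o3' with h | ⟨m, ⟨hp, hv⟩ | ⟨hp, hv⟩ | ⟨hp, hv⟩ | ⟨hp, hv⟩⟩
          · exact h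
          · exfalso
            have hv' := congrArg Fin.val hv
            simp only [vc_val, vd_val] at hv'
            omega
          · exfalso
            have hv' := congrArg Fin.val hv
            simp only [vd_val] at hv'
            have : m = i := Fin.ext (by omega)
            subst this
            exact hk2 (Subtype.ext (by rw [hp]; rfl))
          all_goals
            exfalso
            have hv' := congrArg Fin.val hv
            simp only [va_val, vb_val, vd_val] at hv'
            omega
        -- hence k = {c i, d i}
        have hkval : k.val = {vc i, vd i} := by
          have hsub : ({vc i, vd i} : Finset (Fin (4 * t))) ⊆ k.val := by
            intro x hx
            rcases Finset.mem_insert.mp hx with rfl | hx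
            · exact hkc
            · rw [Finset.mem_singleton.mp hx]; exact hkd
          have hne : vc i ≠ vd i := Fin.ne_of_val_ne (by simp)
          exact (Finset.eq_of_subset_of_card_le hsub
            (by rw [k.prop, Finset.card_pair hne])).symm
        -- but then (k, l) = ({c,d}, a) is not occupied : contradiction with o1
        rcases occupied_elim o1 with h | ⟨m, ⟨hp, hv⟩ | ⟨hp, hv⟩ | ⟨hp, hv⟩ | ⟨hp, hv⟩⟩
        · rw [hkval] at h
          have h2 := mem_pair_nat h
          simp only [vc_val, vd_val] at h2
          omega
        all_goals
          rw [hkval] at hp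
          have hp' := pair_eq_nat hp
          have hv' := congrArg Fin.val hv
          simp only [va_val, vb_val, vc_val, vd_val] at hp' hv'
          omega
      · -- f = wedge2 i : rows {b,d} and {c,d}, columns a and b
        have hl1' : l.val ≠ 4 * i.val := fun h => hl1 (Fin.ext (by simpa [wedge2] using h))
        have hl2' : l.val ≠ 4 * i.val + 1 := fun h => hl2 (Fin.ext (by simpa [wedge2] using h))
        -- from o4 : l ∈ {b i, d i}
        have hlv : l.val = 4 * i.val + 3 := by
          have o4' : Occupied (IncK t) (E2K t)
              (pr (vb i) (vd i) (Fin.ne_of_val_ne (by simp [vb, vd])), l) := o4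
          rcases occupied_elim o4' with h | ⟨m, ⟨hp, hv⟩ | ⟨hp, hv⟩ | ⟨hp, hv⟩ | ⟨hp, hv⟩⟩
          · have h2 := mem_pair_nat (by simpa using h)
            simp only [vb_val, vd_val] at h2
            omega
          all_goals
            exfalso
            have hp' := pair_eq_nat (by simpa using hp)
            have hv' := congrArg Fin.val hv
            simp only [va_val, vb_val, vc_val, vd_val] at hp' hv'
            omega
        -- from o2 : a i ∈ k
        have hka : va i ∈ k.val := by
          have o2' : Occupied (IncK t) (E2K t) (k, va i) := o2
          rcases occupied_elim o2' with h | ⟨m, ⟨hp, hv⟩ | ⟨hp, hv⟩ | ⟨hp, hv⟩ | ⟨hp, hv⟩⟩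
          · exact h
          · exfalso
            have hv' := congrArg Fin.val hv
            simp only [va_val, vc_val] at hv'
            omega
          · exfalso
            have hv' := congrArg Fin.val hv
            simp only [va_val, vd_val] at hv'
            omega
          · exfalso
            have hv' := congrArg Fin.val hv
            simp only [va_val] at hv'
            have : m = i := Fin.ext (by omega)
            subst this
            exact hk1 (Subtype.ext (by rw [hp]; rfl))
          · exfalso
            have hv' := congrArg Fin.val hv
            simp only [va_val, vb_val] at hv'
            omega
        -- from o3 : b i ∈ k
        have hkb : vb i ∈ k.val := by
          have o3' : Occupied (IncK t) (E2K t) (k, vb i) := o3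
          rcases occupied_elim o3' with h | ⟨m, ⟨hp, hv⟩ | ⟨hp, hv⟩ | ⟨hp, hv⟩ | ⟨hp, hv⟩⟩
          · exact h
          · exfalso
            have hv' := congrArg Fin.val hv
            simp only [vb_val, vc_val] at hv'
            omega
          · exfalso
            have hv' := congrArg Fin.val hv
            simp only [vb_val, vd_val] at hv'
            omega
          · exfalso
            have hv' := congrArg Fin.val hv
            simp only [va_val, vb_val] at hv'
            omega
          · exfalso
            have hv' := congrArg Fin.val hv
            simp only [vb_val] at hv'
            have : m = i := Fin.ext (by omega)
            subst this
            exact hk2 (Subtype.ext (by rw [hp]; rfl))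
        -- hence k = {a i, b i}
        have hkval : k.val = {va i, vb i} := by
          have hsub : ({va i, vb i} : Finset (Fin (4 * t))) ⊆ k.val := by
            intro x hx
            rcases Finset.mem_insert.mp hx with rfl | hx
            · exact hka
            · rw [Finset.mem_singleton.mp hx]; exact hkb
          have hne : va i ≠ vb i := Fin.ne_of_val_ne (by simp)
          exact (Finset.eq_of_subset_of_card_le hsub
            (by rw [k.prop, Finset.card_pair hne])).symm
        -- but then (k, l) = ({a,b}, d) is not occupied : contradiction with o1
        rcases occupied_elim o1 with h | ⟨m, ⟨hp, hv⟩ | ⟨hp, hv⟩ | ⟨hp, hv⟩ | ⟨hp, hv⟩⟩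
        · rw [hkval] at h
          have h2 := mem_pair_nat h
          simp only [va_val, vb_val] at h2
          omega
        all_goals
          rw [hkval] at hp
          have hp' := pair_eq_nat hp
          have hv' := congrArg Fin.val hv
          simp only [va_val, vb_val, vc_val, vd_val] at hp' hv'
          omega
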